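/- Let l ∈ ℝ, l ≥ 0. There exists a constant C_l such that for all v, v', v_* ∈ ℝ³ arising from a Boltzmann collision with deviation angle θ ∈ [0, π/2] (i.e. v' = (v+v_*)/2 + (|v−v_*|/2)σ with cosθ = ((v−v_*)/|v−v_*|)·σ), one has ⟨v'⟩^l ≤ C_l ( (1 + θ^l) ⟨v⟩^l + ⟨v_*⟩^l ), where ⟨v⟩ = (1+|v|²)^{1/2}. In particular ⟨v'⟩^l ≤ C_l (⟨v⟩^l + |v'−v|^l) and |v'−v| ≤ |v−v_*| sin(θ/2) ≤ θ(⟨v⟩ + ⟨v_*⟩) up to constants. -/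

import Mathlib

set_option maxHeartbeats 1000000


noncomputable section

private lemma aux_pow_add (l : ℝ) (hl : 0 ≤ l) {y z : ℝ} (hy : 0 ≤ y) (hz : 0 ≤ z) :
    (y + z) ^ l ≤ 2 ^ l * (y ^ l + z ^ l) := by
  rcases le_total y z with h | h
  · calc (y + z) ^ l ≤ (2 * z) ^ l := by
          apply Real.rpow_le_rpow (by linarith) (by linarith) hl
      _ = 2 ^ l * z ^ l := Real.mul_rpow (by norm_num) hz
      _ ≤ 2 ^ l * (y ^ l + z ^ l) := by
          have := Real.rpow_nonneg hy l
          have : (0:ℝ) ≤ 2 ^ l := Real.rpow_nonneg (by norm_num) l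
          nlinarith [Real.rpow_nonneg hy l]
  · calc (y + z) ^ l ≤ (2 * y) ^ l := by
          apply Real.rpow_le_rpow (by linarith) (by linarith) hl
      _ = 2 ^ l * y ^ l := Real.mul_rpow (by norm_num) hy
      _ ≤ 2 ^ l * (y ^ l + z ^ l) := by
          have : (0:ℝ) ≤ 2 ^ l := Real.rpow_nonneg (by norm_num) l
          nlinarith [Real.rpow_nonneg hz l]

private lemma aux_sqrt_le {a b c : ℝ} (ha : 0 ≤ a) (hb : 0 ≤ b) (hc0 : 0 ≤ c)
    (hc : c ≤ a + b) :
    Real.sqrt (1 + c ^ 2) ≤ Real.sqrt (1 + a ^ 2) + b := by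
  have h1 : Real.sqrt (1 + c ^ 2) ≤ Real.sqrt (1 + (a + b) ^ 2) := by
    apply Real.sqrt_le_sqrt
    nlinarith
  refine h1.trans ?_
  have ha2 : a ≤ Real.sqrt (1 + a ^ 2) := by
    calc a = Real.sqrt (a ^ 2) := (Real.sqrt_sq ha).symm
      _ ≤ Real.sqrt (1 + a ^ 2) := Real.sqrt_le_sqrt (by nlinarith)
  have hsq : 1 + (a + b) ^ 2 ≤ (Real.sqrt (1 + a ^ 2) + b) ^ 2 := by
    have := Real.sq_sqrt (show (0:ℝ) ≤ 1 + a ^ 2 by positivity)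
    nlinarith
  calc Real.sqrt (1 + (a + b) ^ 2) ≤ Real.sqrt ((Real.sqrt (1 + a ^ 2) + b) ^ 2) :=
        Real.sqrt_le_sqrt hsq
    _ = Real.sqrt (1 + a ^ 2) + b := Real.sqrt_sq (by positivity)

theorem stmt_7 (l : ℝ) (hl : 0 ≤ l) :
    ∃ Cl : ℝ, 0 < Cl ∧
      ∀ (v vs σ : EuclideanSpace ℝ (Fin 3)) (θ : ℝ),
        ‖σ‖ = 1 → v ≠ vs → θ ∈ Set.Icc (0:ℝ) (Real.pi / 2) →
        Real.cos θ = (inner ℝ (‖v - vs‖⁻¹ • (v - vs)) σ : ℝ) →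
        ∀ v' : EuclideanSpace ℝ (Fin 3),
          v' = (2:ℝ)⁻¹ • (v + vs) + (‖v - vs‖ / 2) • σ →
          Real.sqrt (1 + ‖v'‖ ^ 2) ^ l ≤
              Cl * ((1 + θ ^ l) * Real.sqrt (1 + ‖v‖ ^ 2) ^ l + Real.sqrt (1 + ‖vs‖ ^ 2) ^ l) ∧
            Real.sqrt (1 + ‖v'‖ ^ 2) ^ l ≤
              Cl * (Real.sqrt (1 + ‖v‖ ^ 2) ^ l + ‖v' - v‖ ^ l) ∧
            ‖v' - v‖ ≤ ‖v - vs‖ * Real.sin (θ / 2) ∧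
            ‖v - vs‖ * Real.sin (θ / 2) ≤
              Cl * (θ * (Real.sqrt (1 + ‖v‖ ^ 2) + Real.sqrt (1 + ‖vs‖ ^ 2))) := by
  refine ⟨2 ^ l, Real.rpow_pos_of_pos (by norm_num) l, ?_⟩
  intro v vs σ θ hσ hne hθ hcos v' hv'
  have hθ0 : 0 ≤ θ := hθ.1
  have hθpi : θ ≤ Real.pi / 2 := hθ.2
  set A := Real.sqrt (1 + ‖v‖ ^ 2) with hA
  set B := Real.sqrt (1 + ‖vs‖ ^ 2) with hB
  have hA0 : 0 ≤ A := Real.sqrt_nonneg _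
  have hB0 : 0 ≤ B := Real.sqrt_nonneg _
  have hA2 : A ^ 2 = 1 + ‖v‖ ^ 2 := Real.sq_sqrt (by positivity)
  have hB2 : B ^ 2 = 1 + ‖vs‖ ^ 2 := Real.sq_sqrt (by positivity)
  have hvA : ‖v‖ ≤ A := by
    nlinarith [norm_nonneg v]
  have hvsB : ‖vs‖ ≤ B := by
    nlinarith [norm_nonneg vs]
  have hRne : ‖v - vs‖ ≠ 0 := fun h => hne (sub_eq_zero.mp (norm_eq_zero.mp h))
  have hR0 : 0 ≤ ‖v - vs‖ := norm_nonneg _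
  -- inner product fact
  have hinner : (inner ℝ (v - vs) σ : ℝ) = ‖v - vs‖ * Real.cos θ := by
    rw [hcos, real_inner_smul_left]
    field_simp
  -- d = ‖v-vs‖ sin(θ/2)
  have hd : ‖v' - v‖ = ‖v - vs‖ * Real.sin (θ / 2) := by
    have hveq : v' - v = (‖v - vs‖ / 2) • σ - (2:ℝ)⁻¹ • (v - vs) := by
      rw [hv']
      module
    have hσ2 : (inner ℝ σ σ : ℝ) = 1 := by
      rw [real_inner_self_eq_norm_sq, hσ]; norm_num
    have hinner' : (inner ℝ σ (v - vs) : ℝ) = ‖v - vs‖ * Real.cos θ := by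
      rw [real_inner_comm]; exact hinner
    have hd2 : ‖v' - v‖ ^ 2 = ‖v - vs‖ ^ 2 * ((1 - Real.cos θ) / 2) := by
      rw [hveq, ← real_inner_self_eq_norm_sq]
      simp only [inner_sub_sub_self, real_inner_smul_left, real_inner_smul_right,
        real_inner_self_eq_norm_sq, hσ, hinner, hinner', one_pow]
      simp only [norm_smul, hσ, mul_one, Real.norm_eq_abs]
      rw [abs_of_nonneg (by positivity : (0:ℝ) ≤ ‖v - vs‖ / 2),
        abs_of_nonneg (by norm_num : (0:ℝ) ≤ (2:ℝ)⁻¹)]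
      ring
    have hsin : Real.sin (θ / 2) = Real.sqrt ((1 - Real.cos θ) / 2) :=
      Real.sin_half_eq_sqrt hθ0 (by nlinarith [Real.pi_pos])
    rw [← Real.sqrt_sq (norm_nonneg (v' - v)), hd2, hsin, Real.sqrt_mul (by positivity),
      Real.sqrt_sq hR0]
  have hsin0 : 0 ≤ Real.sin (θ / 2) := by
    apply Real.sin_nonneg_of_nonneg_of_le_pi (by linarith)
    nlinarith [Real.pi_pos]
  -- energy bound: ‖v'‖² ≤ ‖v‖² + ‖vs‖²
  have hpar : ‖v + vs‖ ^ 2 + ‖v - vs‖ ^ 2 = 2 * (‖v‖ ^ 2 + ‖vs‖ ^ 2) := by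
    have h := parallelogram_law_with_norm ℝ v vs
    rw [pow_two, pow_two, pow_two, pow_two]
    linarith
  have hv'le : ‖v'‖ ≤ ‖v + vs‖ / 2 + ‖v - vs‖ / 2 := by
    rw [hv']
    refine (norm_add_le _ _).trans ?_
    rw [norm_smul, norm_smul, hσ, mul_one, Real.norm_eq_abs, Real.norm_eq_abs,
      abs_of_nonneg (by norm_num : (0:ℝ) ≤ (2:ℝ)⁻¹),
      abs_of_nonneg (by positivity : (0:ℝ) ≤ ‖v - vs‖ / 2)]
    linarith
  have hv'sq : ‖v'‖ ^ 2 ≤ ‖v‖ ^ 2 + ‖vs‖ ^ 2 := by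
    nlinarith [norm_nonneg v', norm_nonneg (v + vs), norm_nonneg (v - vs), hv'le, hpar,
      sq_nonneg (‖v + vs‖ - ‖v - vs‖), sq_nonneg (‖v + vs‖ / 2 + ‖v - vs‖ / 2 - ‖v'‖)]
  -- A' ≤ A + B
  have hAB : Real.sqrt (1 + ‖v'‖ ^ 2) ≤ A + B := by
    have h1 : Real.sqrt (1 + ‖v'‖ ^ 2) ≤ Real.sqrt (A ^ 2 + B ^ 2) := by
      apply Real.sqrt_le_sqrt; rw [hA2, hB2]; linarith
    refine h1.trans ?_
    calc Real.sqrt (A ^ 2 + B ^ 2) ≤ Real.sqrt ((A + B) ^ 2) :=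
          Real.sqrt_le_sqrt (by nlinarith)
      _ = A + B := Real.sqrt_sq (by positivity)
  -- A' ≤ A + d
  have hAd : Real.sqrt (1 + ‖v'‖ ^ 2) ≤ A + ‖v' - v‖ := by
    have : ‖v'‖ ≤ ‖v‖ + ‖v' - v‖ := by
      calc ‖v'‖ = ‖v + (v' - v)‖ := by rw [add_sub_cancel]
        _ ≤ ‖v‖ + ‖v' - v‖ := norm_add_le _ _
    exact aux_sqrt_le (norm_nonneg v) (norm_nonneg _) (norm_nonneg v') this
  have h2l1 : (1:ℝ) ≤ 2 ^ l := Real.one_le_rpow (by norm_num) hl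
  have h2l0 : (0:ℝ) ≤ 2 ^ l := by linarith
  refine ⟨?_, ?_, ?_, ?_⟩
  · -- first
    calc Real.sqrt (1 + ‖v'‖ ^ 2) ^ l ≤ (A + B) ^ l :=
          Real.rpow_le_rpow (Real.sqrt_nonneg _) hAB hl
      _ ≤ 2 ^ l * (A ^ l + B ^ l) := aux_pow_add l hl hA0 hB0
      _ ≤ 2 ^ l * ((1 + θ ^ l) * A ^ l + B ^ l) := by
          have h1 : 0 ≤ θ ^ l := Real.rpow_nonneg hθ0 l
          have h2 : 0 ≤ A ^ l := Real.rpow_nonneg hA0 l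
          nlinarith [mul_nonneg h2l0 (mul_nonneg h1 h2)]
  · -- second
    calc Real.sqrt (1 + ‖v'‖ ^ 2) ^ l ≤ (A + ‖v' - v‖) ^ l :=
          Real.rpow_le_rpow (Real.sqrt_nonneg _) hAd hl
      _ ≤ 2 ^ l * (A ^ l + ‖v' - v‖ ^ l) := aux_pow_add l hl hA0 (norm_nonneg _)
  · exact le_of_eq hd
  · -- fourth
    have hRAB : ‖v - vs‖ ≤ A + B := (norm_sub_le v vs).trans (by linarith)
    have hsinθ : Real.sin (θ / 2) ≤ θ := (Real.sin_le (by linarith)).trans (by linarith)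
    calc ‖v - vs‖ * Real.sin (θ / 2) ≤ (A + B) * θ := by
          apply mul_le_mul hRAB hsinθ hsin0 (by linarith)
      _ = 1 * (θ * (A + B)) := by ring
      _ ≤ 2 ^ l * (θ * (A + B)) := by
          apply mul_le_mul_of_nonneg_right h2l1 (by positivity)
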